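/- The family (X_λ, Y_λ) of unique solutions of λX_λ + B₁(X_λ,Y_λ) = 0, λY_λ + B₂(X_λ,Y_λ) = 0 does not converge as λ → 0+; that is, there is no point (a,b) ∈ ℝ² such that (X_λ,Y_λ) → (a,b) as λ → 0+. -/

import Mathlib

open Real Filter Topology

/-- The 2×2 matrix C(α,β) from the paper. -/
noncomputable def Cmat (a b : ℝ) : Matrix (Fin 2) (Fin 2) ℝ :=
  1 + b • !![-a, -1 + a; -1 + a, -a] + (1 - b) • !![-1 + a, -a; -a, -1 + a]

/-- The running costs L₁, L₂. -/
noncomputable def Lfun (i : Fin 2) (a b : ℝ) : ℝ :=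
  if i = 0 then a * b + 2 * (1 - a) * (1 - b) else -(a * b) - 2 * (1 - a) * (1 - b)

/-- b_i(α,β,u₁,u₂) = c_{i1}(α,β)u₁ + c_{i2}(α,β)u₂ − L_i(α,β). -/
noncomputable def bfun (i : Fin 2) (a b u₁ u₂ : ℝ) : ℝ :=
  Cmat a b i 0 * u₁ + Cmat a b i 1 * u₂ - Lfun i a b

/-- A_i(u₁,u₂) = max_{α∈𝒜} min_{β∈ℬ} b_i(α,β,u₁,u₂). -/
noncomputable def Afun (As Bs : Set ℝ) (i : Fin 2) (u₁ u₂ : ℝ) : ℝ :=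
  sSup ((fun a => sInf ((fun b => bfun i a b u₁ u₂) '' Bs)) '' As)

/-- The set 𝒜 = {2 − √2 + 4^{−k} : k ≥ 1} ∪ {2 − √2}. -/
noncomputable def calA : Set ℝ :=
  {x | ∃ k : ℕ, 1 ≤ k ∧ x = 2 - Real.sqrt 2 + (4 : ℝ) ^ (-(k : ℤ))} ∪ {2 - Real.sqrt 2}

/-- The set ℬ = {0, 1}. -/
def calB : Set ℝ := {0, 1}

/-- B_i(u₁,u₂) = max_{α∈𝒜} min_{β∈ℬ} b_i(α,β,u₁,u₂). -/
noncomputable def Bop (i : Fin 2) (u₁ u₂ : ℝ) : ℝ := Afun calA calB i u₁ u₂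


noncomputable def g0 (a w : ℝ) : ℝ := min (a*w + 2*a - 2) ((1-a)*w - a)
noncomputable def g1 (a w : ℝ) : ℝ := min (-(a*w + 2*a - 2)) (-((1-a)*w - a))
noncomputable def F0 (w : ℝ) : ℝ := sSup ((fun a => g0 a w) '' calA)
noncomputable def F1 (w : ℝ) : ℝ := sSup ((fun a => g1 a w) '' calA)


lemma s2_lb : (1.4142135 : ℝ) ≤ Real.sqrt 2 := by
  nlinarith [Real.sq_sqrt (by norm_num : (0:ℝ) ≤ 2), Real.sqrt_nonneg 2]
lemma s2_ub : Real.sqrt 2 ≤ 1.4142136 := by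
  nlinarith [Real.sq_sqrt (by norm_num : (0:ℝ) ≤ 2), Real.sqrt_nonneg 2]

lemma a0_mem : 2 - Real.sqrt 2 ∈ calA := Or.inr rfl
lemma mem_calA_eps (k : ℕ) (hk : 1 ≤ k) : 2 - Real.sqrt 2 + (4:ℝ)^(-(k:ℤ)) ∈ calA :=
  Or.inl ⟨k, hk, rfl⟩

lemma calA_bounds {a : ℝ} (ha : a ∈ calA) :
    2 - Real.sqrt 2 ≤ a ∧ a ≤ 2 - Real.sqrt 2 + 4⁻¹ := by
  rcases ha with ⟨k, hk, rfl⟩ | h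
  · have h1 : (0:ℝ) < (4:ℝ)^(-(k:ℤ)) := by positivity
    have h2 : (4:ℝ)^(-(k:ℤ)) ≤ (4:ℝ)^(-(1:ℤ)) := by
      apply zpow_le_zpow_right₀ (by norm_num)
      omega
    norm_num at h2 ⊢
    linarith
  · simp at h; subst h; norm_num

lemma calA_bounds' {a : ℝ} (ha : a ∈ calA) : (0:ℝ) ≤ a ∧ a ≤ 1 := by
  obtain ⟨h1, h2⟩ := calA_bounds ha
  have := s2_lb; have := s2_ub
  constructor <;> linarith

lemma bdd0 (w : ℝ) : BddAbove ((fun a => g0 a w) '' calA) := by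
  refine ⟨|w| + 2, ?_⟩
  rintro x ⟨a, ha, rfl⟩
  obtain ⟨h0, h1⟩ := calA_bounds' ha
  have : a * w ≤ |w| := by
    calc a * w ≤ |a * w| := le_abs_self _
    _ = a * |w| := by rw [abs_mul, abs_of_nonneg h0]
    _ ≤ 1 * |w| := by apply mul_le_mul_of_nonneg_right h1 (abs_nonneg w)
    _ = |w| := one_mul _
  have h2 : g0 a w ≤ a*w + 2*a - 2 := min_le_left _ _
  simp only [g0] at h2 ⊢
  linarith

lemma bdd1 (w : ℝ) : BddAbove ((fun a => g1 a w) '' calA) := by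
  refine ⟨|w| + 2, ?_⟩
  rintro x ⟨a, ha, rfl⟩
  obtain ⟨h0, h1⟩ := calA_bounds' ha
  have : (a-1) * w ≤ |w| := by
    calc (a-1) * w ≤ |(a-1) * w| := le_abs_self _
    _ = (1-a) * |w| := by rw [abs_mul, abs_of_nonpos (by linarith : a - 1 ≤ 0)]; ring_nf
    _ ≤ 1 * |w| := by apply mul_le_mul_of_nonneg_right (by linarith) (abs_nonneg w)
    _ = |w| := one_mul _
  have h2 : g1 a w ≤ -((1-a)*w - a) := min_le_right _ _
  simp only [g1] at h2 ⊢
  linarith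

lemma F0_ge {a : ℝ} (ha : a ∈ calA) (w : ℝ) : g0 a w ≤ F0 w :=
  le_csSup (bdd0 w) ⟨a, ha, rfl⟩
lemma F1_ge {a : ℝ} (ha : a ∈ calA) (w : ℝ) : g1 a w ≤ F1 w :=
  le_csSup (bdd1 w) ⟨a, ha, rfl⟩
lemma F0_le {w M : ℝ} (h : ∀ a ∈ calA, g0 a w ≤ M) : F0 w ≤ M := by
  apply csSup_le (Set.Nonempty.image _ ⟨_, a0_mem⟩)
  rintro x ⟨a, ha, rfl⟩; exact h a ha
lemma F1_le {w M : ℝ} (h : ∀ a ∈ calA, g1 a w ≤ M) : F1 w ≤ M := by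
  apply csSup_le (Set.Nonempty.image _ ⟨_, a0_mem⟩)
  rintro x ⟨a, ha, rfl⟩; exact h a ha

-- V* bound: for w ≥ -1, F0 w ≤ (w^2-2)/(2w+3)
lemma F0_upper {w : ℝ} (hw : -1 ≤ w) : F0 w ≤ (w^2 - 2)/(2*w+3) := by
  apply F0_le
  intro a ha
  rw [le_div_iff₀ (by linarith)]
  have h1 : g0 a w ≤ a*w + 2*a - 2 := min_le_left _ _
  have h2 : g0 a w ≤ (1-a)*w - a := min_le_right _ _
  nlinarith [mul_le_mul_of_nonneg_left h1 (by linarith : (0:ℝ) ≤ w+1),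
    mul_le_mul_of_nonneg_left h2 (by linarith : (0:ℝ) ≤ w+2)]

lemma F1_upper {w : ℝ} (hw : -1 ≤ w) : F1 w ≤ (2 - w^2)/(2*w+3) := by
  apply F1_le
  intro a ha
  rw [le_div_iff₀ (by linarith)]
  have h1 : g1 a w ≤ -(a*w + 2*a - 2) := min_le_left _ _
  have h2 : g1 a w ≤ -((1-a)*w - a) := min_le_right _ _
  nlinarith [mul_le_mul_of_nonneg_left h1 (by linarith : (0:ℝ) ≤ w+1),
    mul_le_mul_of_nonneg_left h2 (by linarith : (0:ℝ) ≤ w+2)]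

-- Lipschitz
lemma F0_lip (w w' : ℝ) : F0 w ≤ F0 w' + |w - w'| := by
  apply F0_le
  intro a ha
  have key : g0 a w ≤ g0 a w' + |w - w'| := by
    obtain ⟨h0, h1⟩ := calA_bounds' ha
    have e1 : a*(w-w') ≤ |w - w'| := by
      calc a*(w-w') ≤ |a*(w-w')| := le_abs_self _
      _ = a * |w-w'| := by rw [abs_mul, abs_of_nonneg h0]
      _ ≤ 1 * |w-w'| := mul_le_mul_of_nonneg_right h1 (abs_nonneg _)
      _ = |w-w'| := one_mul _
    have e2 : (1-a)*(w-w') ≤ |w - w'| := by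
      calc (1-a)*(w-w') ≤ |(1-a)*(w-w')| := le_abs_self _
      _ = (1-a) * |w-w'| := by rw [abs_mul, abs_of_nonneg (by linarith)]
      _ ≤ 1 * |w-w'| := mul_le_mul_of_nonneg_right (by linarith) (abs_nonneg _)
      _ = |w-w'| := one_mul _
    simp only [g0]
    rcases le_total (a * w' + 2 * a - 2) ((1 - a) * w' - a) with hc | hc
    · rw [min_eq_left hc]; nlinarith [min_le_left (a*w + 2*a - 2) ((1-a)*w - a)]
    · rw [min_eq_right hc]; nlinarith [min_le_right (a*w + 2*a - 2) ((1-a)*w - a)]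
  calc g0 a w ≤ g0 a w' + |w - w'| := key
  _ ≤ F0 w' + |w - w'| := by linarith [F0_ge ha w']

lemma bfun00 (a u v : ℝ) : bfun 0 a 0 u v = a*(u-v) + 2*a - 2 := by
  simp [bfun, Cmat, Lfun, Matrix.add_apply, Matrix.smul_apply, Matrix.one_apply]; ring
lemma bfun01 (a u v : ℝ) : bfun 0 a 1 u v = (1-a)*(u-v) - a := by
  simp [bfun, Cmat, Lfun, Matrix.add_apply, Matrix.smul_apply, Matrix.one_apply]; ring
lemma bfun10 (a u v : ℝ) : bfun 1 a 0 u v = -(a*(u-v) + 2*a - 2) := by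
  simp [bfun, Cmat, Lfun, Matrix.add_apply, Matrix.smul_apply, Matrix.one_apply]; ring
lemma bfun11 (a u v : ℝ) : bfun 1 a 1 u v = -((1-a)*(u-v) - a) := by
  simp [bfun, Cmat, Lfun, Matrix.add_apply, Matrix.smul_apply, Matrix.one_apply]; ring

lemma Bop0_eq (u v : ℝ) : Bop 0 u v = F0 (u - v) := by
  have h : (fun a => sInf ((fun b => bfun 0 a b u v) '' calB)) = fun a => g0 a (u - v) := by
    funext a
    rw [calB, Set.image_pair, csInf_pair, bfun00, bfun01, g0]
  rw [Bop, Afun, h, F0]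

lemma Bop1_eq (u v : ℝ) : Bop 1 u v = F1 (u - v) := by
  have h : (fun a => sInf ((fun b => bfun 1 a b u v) '' calB)) = fun a => g1 a (u - v) := by
    funext a
    rw [calB, Set.image_pair, csInf_pair, bfun10, bfun11, g1]
  rw [Bop, Afun, h, F1]

lemma F1_lip (w w' : ℝ) : F1 w ≤ F1 w' + |w - w'| := by
  apply F1_le
  intro a ha
  have key : g1 a w ≤ g1 a w' + |w - w'| := by
    obtain ⟨h0, h1⟩ := calA_bounds' ha
    have e1 : -(a*(w-w')) ≤ |w - w'| := by
      rw [← abs_neg (w-w')]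
      calc -(a*(w-w')) = a*(-(w-w')) := by ring
      _ ≤ |a*(-(w-w'))| := le_abs_self _
      _ = a * |(-(w-w'))| := by rw [abs_mul, abs_of_nonneg h0]
      _ ≤ 1 * |(-(w-w'))| := mul_le_mul_of_nonneg_right h1 (abs_nonneg _)
      _ = |(-(w-w'))| := one_mul _
    have e2 : -((1-a)*(w-w')) ≤ |w - w'| := by
      rw [← abs_neg (w-w')]
      calc -((1-a)*(w-w')) = (1-a)*(-(w-w')) := by ring
      _ ≤ |(1-a)*(-(w-w'))| := le_abs_self _
      _ = (1-a) * |(-(w-w'))| := by rw [abs_mul, abs_of_nonneg (by linarith)]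
      _ ≤ 1 * |(-(w-w'))| := mul_le_mul_of_nonneg_right (by linarith) (abs_nonneg _)
      _ = |(-(w-w'))| := one_mul _
    simp only [g1]
    rcases le_total (-(a * w' + 2 * a - 2)) (-((1 - a) * w' - a)) with hc | hc
    · rw [min_eq_left hc]; linarith [min_le_left (-(a*w + 2*a - 2)) (-((1-a)*w - a))]
    · rw [min_eq_right hc]; linarith [min_le_right (-(a*w + 2*a - 2)) (-((1-a)*w - a))]
  calc g1 a w ≤ g1 a w' + |w - w'| := key
  _ ≤ F1 w' + |w - w'| := by linarith [F1_ge ha w']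


lemma w_lt_s2 {lam x y : ℝ} (hlam : 0 < lam)
    (hX : lam * x + F0 (x - y) = 0) (hY : lam * y + F1 (x - y) = 0) :
    x - y < Real.sqrt 2 := by
  have hs2 : (Real.sqrt 2)^2 = 2 := Real.sq_sqrt (by norm_num)
  have hl := s2_lb; have hu := s2_ub
  by_contra hcon
  push_neg at hcon
  set s2 := Real.sqrt 2 with hs2def
  set w := x - y with hwdef
  have h1 : g0 (2 - s2) w ≤ F0 w := F0_ge a0_mem w
  have h2 : (0:ℝ) ≤ g0 (2 - s2) w := by
    simp only [g0]
    apply le_min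
    · nlinarith
    · nlinarith
  have h3 : F1 w ≤ 2 - (2-s2)*(w+2) := by
    apply F1_le
    intro a ha
    obtain ⟨hal, hau⟩ := calA_bounds ha
    have hm := min_le_left (-(a*w + 2*a - 2)) (-((1-a)*w - a))
    simp only [g1]
    nlinarith
  have h4 : F1 w ≤ 0 := by nlinarith
  have hlw : lam * w = F1 w - F0 w := by
    have : lam * w = lam * x - lam * y := by rw [hwdef]; ring
    linarith
  nlinarith [mul_pos hlam (show (0:ℝ) < w by nlinarith)]

set_option maxHeartbeats 1000000 in
lemma claimA {lam x y : ℝ} (hlam : 0 < lam) (k : ℕ) (hk : 1 ≤ k)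
    (he : (429/10000) * lam = (4:ℝ)^(-(k:ℤ)))
    (hX : lam * x + F0 (x - y) = 0) (hY : lam * y + F1 (x - y) = 0)
    (hw : |x - y - Real.sqrt 2| ≤ 1/1000) : x ≤ 143/200 := by
  set s2 := Real.sqrt 2 with hs2def
  have hs2 : s2^2 = 2 := Real.sq_sqrt (by norm_num)
  have hl : (1.4142135:ℝ) ≤ s2 := s2_lb
  have hu : s2 ≤ 1.4142136 := s2_ub
  set w := x - y with hwdef
  set e := (4:ℝ)^(-(k:ℤ)) with hedef
  have hepos : (0:ℝ) < e := by positivity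
  have hwlt : w < s2 := w_lt_s2 hlam hX hY
  have hwge : s2 - 1/1000 ≤ w := by
    rw [abs_le] at hw; linarith [hw.1]
  set P := F0 w with hPdef
  set Q := F1 w with hQdef
  have hlX : lam * x = -P := by linarith
  have hlw : lam * w = Q - P := by
    have : lam * w = lam * x - lam * y := by rw [hwdef]; ring
    linarith
  have h23 : (0:ℝ) < 2*w + 3 := by linarith
  have hP0' : (2*w+3) * P ≤ w^2 - 2 := by
    have h := F0_upper (show (-1:ℝ) ≤ w by linarith)
    rw [le_div_iff₀ h23] at h
    linarith
  have hmem : 2 - s2 + e ∈ calA := mem_calA_eps k hk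
  have hP1 : min ((2-s2+e)*w + 2*(2-s2+e) - 2) ((1-(2-s2+e))*w - (2-s2+e)) ≤ P :=
    F0_ge hmem w
  have hQ1 : min (-((2-s2+e)*w + 2*(2-s2+e) - 2)) (-((1-(2-s2+e))*w - (2-s2+e))) ≤ Q :=
    F1_ge hmem w
  have hs2w : s2^2 * w = 2 * w := by rw [hs2]
  have he' : e = (429/10000) * lam := he.symm
  have hlw3 : (2*w+3)*(lam*w) = (2*w+3)*Q - (2*w+3)*P := by rw [hlw]; ring
  clear_value s2 w e P Q
  clear hX hY hlw hmem hedef hwdef hs2def hPdef hQdef he hw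
  have hb1 : (2*w+3)*(lam*w) ≤ 8.2427*lam := by
    have h1 : (0:ℝ) ≤ 8.2427 - (2*w+3)*w := by nlinarith [sq_nonneg (w - 1.4142136)]
    linarith [mul_nonneg h1 hlam.le]
  rcases le_total ((2-s2+e)*w + 2*(2-s2+e) - 2) ((1-(2-s2+e))*w - (2-s2+e)) with hc | hc
  · rw [min_eq_left hc] at hP1
    rw [min_eq_right (by linarith)] at hQ1
    have hq := mul_le_mul_of_nonneg_left hQ1 h23.le
    have hstep : ((s2-1)*(2*w+3) + w + s2)*(s2-w) + (2*w+3)*e*(w+1) ≤ (2*w+3)*(lam*w) := by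
      linarith [hq, hP0', hlw3, hs2, hs2w]
    have hwq : (14.06:ℝ) ≤ (2*w+3)*(w+1) := by
      linarith [mul_nonneg (show (0:ℝ) ≤ 2*w+3-5.8264 by linarith)
        (show (0:ℝ) ≤ w+1-2.4132 by linarith)]
    have hb2 : 0.603*lam ≤ (2*w+3)*e*(w+1) := by
      rw [he']
      linarith [mul_le_mul_of_nonneg_left hwq hlam.le]
    have hKb : (0:ℝ) ≤ ((s2-1)*(2*w+3) + w + s2 - 5.2408) * (s2 - w) := by
      apply mul_nonneg _ (by linarith)
      linarith [mul_nonneg (show (0:ℝ) ≤ s2 - 1.4142135 by linarith)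
        (show (0:ℝ) ≤ 2*w+3 - 5.8264270 by linarith)]
    have hc1 : s2 - w ≤ 1.4578*lam := by linarith [hstep, hb1, hb2, hKb]
    have hfin : lam * x ≤ (2-s2)*(s2-w) - e*(w+2) := by
      rw [hlX]; linarith [hP1, hs2]
    have hp1 : (2-s2)*(s2-w) ≤ 0.5857865*(s2-w) := by
      linarith [mul_nonneg (show (0:ℝ) ≤ 0.5857865 - (2-s2) by linarith)
        (show (0:ℝ) ≤ s2 - w by linarith)]
    have hp2 : (429/10000)*lam*3.4132135 ≤ e*(w+2) := by
      rw [he']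
      linarith [mul_nonneg (show (0:ℝ) ≤ (429/10000)*lam by positivity)
        (show (0:ℝ) ≤ w + 2 - 3.4132135 by linarith)]
    have hxl : lam * x ≤ lam * (143/200) := by linarith [hfin, hp1, hp2, hc1]
    exact (mul_le_mul_iff_right₀ hlam).mp hxl
  · rw [min_eq_right hc] at hP1
    rw [min_eq_left (by linarith)] at hQ1
    have hq := mul_le_mul_of_nonneg_left hQ1 h23.le
    have hstep : ((2-s2)*(2*w+3) + w + s2)*(s2-w) ≤ (2*w+3)*(lam*w) + (2*w+3)*e*(w+2) := by
      linarith [hq, hP0', hlw3, hs2, hs2w]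
    have hb3 : (2*w+3)*e*(w+2) ≤ 0.8538*lam := by
      rw [he']
      have h1 : (2*w+3)*(w+2) ≤ 19.8996 := by
        linarith [mul_nonneg (show (0:ℝ) ≤ 5.8284272 - (2*w+3) by linarith)
          (show (0:ℝ) ≤ (w+2) - 3.4132135 by linarith)]
      linarith [mul_le_mul_of_nonneg_left h1 hlam.le]
    have hK2b : (0:ℝ) ≤ ((2-s2)*(2*w+3) + w + s2 - 6.2404) * (s2 - w) := by
      apply mul_nonneg _ (by linarith)
      linarith [mul_nonneg (show (0:ℝ) ≤ (2-s2) - 0.5857864 by linarith)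
        (show (0:ℝ) ≤ 2*w+3 - 5.8264270 by linarith)]
    have hc1 : s2 - w ≤ 1.45772*lam := by linarith [hstep, hb1, hb3, hK2b]
    have hfin : lam * x ≤ (s2-1)*(s2-w) + e*(w+1) := by
      rw [hlX]; linarith [hP1, hs2]
    have hp1 : (s2-1)*(s2-w) ≤ 0.4142136*(s2-w) := by
      linarith [mul_nonneg (show (0:ℝ) ≤ 0.4142136 - (s2-1) by linarith)
        (show (0:ℝ) ≤ s2 - w by linarith)]
    have hp2 : e*(w+1) ≤ (429/10000)*lam*2.4142136 := by
      rw [he']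
      linarith [mul_nonneg (show (0:ℝ) ≤ (429/10000)*lam by positivity)
        (show (0:ℝ) ≤ 2.4142136 - (w+1) by linarith)]
    have hxl : lam * x ≤ lam * (143/200) := by linarith [hfin, hp1, hp2, hc1]
    exact (mul_le_mul_iff_right₀ hlam).mp hxl

lemma grid_dichotomy {a : ℝ} (ha : a ∈ calA) (k : ℕ) :
    a ≤ 2 - Real.sqrt 2 + (4:ℝ)^(-(k:ℤ)) ∨ 2 - Real.sqrt 2 + 4*(4:ℝ)^(-(k:ℤ)) ≤ a := by
  rcases ha with ⟨j, hj, rfl⟩ | h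
  · rcases le_or_gt k j with h' | h'
    · left
      have : (4:ℝ)^(-(j:ℤ)) ≤ (4:ℝ)^(-(k:ℤ)) := by
        apply zpow_le_zpow_right₀ (by norm_num : (1:ℝ) ≤ 4)
        omega
      linarith
    · right
      have h4 : 4*(4:ℝ)^(-(k:ℤ)) = (4:ℝ)^(1-(k:ℤ)) := by
        rw [zpow_sub₀ (by norm_num : (4:ℝ) ≠ 0)]
        field_simp
        rw [← zpow_add₀ (by norm_num : (4:ℝ) ≠ 0), neg_add_cancel, zpow_zero]
      have : (4:ℝ)^(1-(k:ℤ)) ≤ (4:ℝ)^(-(j:ℤ)) := by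
        apply zpow_le_zpow_right₀ (by norm_num : (1:ℝ) ≤ 4)
        omega
      rw [h4]; linarith
  · left
    simp only [Set.mem_singleton_iff] at h
    subst h
    have : (0:ℝ) < (4:ℝ)^(-(k:ℤ)) := by positivity
    linarith

set_option maxHeartbeats 1000000 in
lemma claimB {lam x y : ℝ} (hlam : 0 < lam) (k : ℕ) (hk : 2 ≤ k)
    (he : (274/10000) * lam = (4:ℝ)^(-(k:ℤ)))
    (hX : lam * x + F0 (x - y) = 0) (hY : lam * y + F1 (x - y) = 0)
    (hw : |x - y - Real.sqrt 2| ≤ 1/1000) : 149/200 ≤ x := by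
  set s2 := Real.sqrt 2 with hs2def
  have hs2 : s2^2 = 2 := Real.sq_sqrt (by norm_num)
  have hl : (1.4142135:ℝ) ≤ s2 := s2_lb
  have hu : s2 ≤ 1.4142136 := s2_ub
  set w := x - y with hwdef
  set e := (4:ℝ)^(-(k:ℤ)) with hedef
  have hepos : (0:ℝ) < e := by positivity
  have hwlt : w < s2 := w_lt_s2 hlam hX hY
  have hwge : s2 - 1/1000 ≤ w := by
    rw [abs_le] at hw; linarith [hw.1]
  set P := F0 w with hPdef
  set Q := F1 w with hQdef
  have hlX : lam * x = -P := by linarith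
  have hlw : lam * w = Q - P := by
    have : lam * w = lam * x - lam * y := by rw [hwdef]; ring
    linarith
  have h23 : (0:ℝ) < 2*w + 3 := by linarith
  have hP0' : (2*w+3) * P ≤ w^2 - 2 := by
    have h := F0_upper (show (-1:ℝ) ≤ w by linarith)
    rw [le_div_iff₀ h23] at h
    linarith
  have hQ0' : (2*w+3) * Q ≤ 2 - w^2 := by
    have h := F1_upper (show (-1:ℝ) ≤ w by linarith)
    rw [le_div_iff₀ h23] at h
    linarith
  have hmem : 2 - s2 + e ∈ calA := mem_calA_eps k (by omega)
  have hP1 : min ((2-s2+e)*w + 2*(2-s2+e) - 2) ((1-(2-s2+e))*w - (2-s2+e)) ≤ P :=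
    F0_ge hmem w
  have hQ1 : min (-((2-s2+e)*w + 2*(2-s2+e) - 2)) (-((1-(2-s2+e))*w - (2-s2+e))) ≤ Q :=
    F1_ge hmem w
  have hPa : min ((2-s2)*w + 2*(2-s2) - 2) ((1-(2-s2))*w - (2-s2)) ≤ P :=
    F0_ge a0_mem w
  have hQa : min (-((2-s2)*w + 2*(2-s2) - 2)) (-((1-(2-s2))*w - (2-s2))) ≤ Q :=
    F1_ge a0_mem w
  -- sup upper bounds via grid dichotomy
  have hPle : P ≤ max ((2-s2+e)*w + 2*(2-s2+e) - 2) ((1-(2-s2+4*e))*w - (2-s2+4*e)) := by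
    apply F0_le
    intro a ha
    rcases grid_dichotomy ha k with h' | h'
    · rw [← hs2def, ← hedef] at h'
      apply le_trans _ (le_max_left _ _)
      have h1 := min_le_left (a*w + 2*a - 2) ((1-a)*w - a)
      simp only [g0]
      linarith [h1, mul_nonneg (sub_nonneg.mpr h') (show (0:ℝ) ≤ w + 2 by linarith)]
    · rw [← hs2def, ← hedef] at h'
      apply le_trans _ (le_max_right _ _)
      have h1 := min_le_right (a*w + 2*a - 2) ((1-a)*w - a)
      simp only [g0]
      linarith [h1, mul_nonneg (sub_nonneg.mpr h') (show (0:ℝ) ≤ w + 1 by linarith)]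
  have hQle : Q ≤ max (-((1-(2-s2+e))*w - (2-s2+e))) (-((2-s2+4*e)*w + 2*(2-s2+4*e) - 2)) := by
    apply F1_le
    intro a ha
    rcases grid_dichotomy ha k with h' | h'
    · rw [← hs2def, ← hedef] at h'
      apply le_trans _ (le_max_left _ _)
      have h1 := min_le_right (-(a*w + 2*a - 2)) (-((1-a)*w - a))
      simp only [g1]
      linarith [h1, mul_nonneg (sub_nonneg.mpr h') (show (0:ℝ) ≤ w + 1 by linarith)]
    · rw [← hs2def, ← hedef] at h'
      apply le_trans _ (le_max_right _ _)
      have h1 := min_le_left (-(a*w + 2*a - 2)) (-((1-a)*w - a))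
      simp only [g1]
      linarith [h1, mul_nonneg (sub_nonneg.mpr h') (show (0:ℝ) ≤ w + 2 by linarith)]
  have hs2w : s2^2 * w = 2 * w := by rw [hs2]
  have he' : e = (274/10000) * lam := he.symm
  have hlw3 : (2*w+3)*(lam*w) = (2*w+3)*Q - (2*w+3)*P := by rw [hlw]; ring
  clear_value s2 w e P Q
  clear hX hY hmem hedef hwdef hs2def hPdef hQdef he hw
  -- resolve min at a0
  have hcond0 : (2-s2)*w + 2*(2-s2) - 2 ≤ (1-(2-s2))*w - (2-s2) := by
    linarith [mul_nonneg (show (0:ℝ) ≤ 3 - 2*s2 by linarith)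
      (show (0:ℝ) ≤ s2 - w by linarith), hs2]
  rw [min_eq_left hcond0] at hPa
  rw [min_eq_right (by linarith : -((1-(2-s2))*w - (2-s2)) ≤ -((2-s2)*w + 2*(2-s2) - 2))] at hQa
  -- band lower : 1.3189 lam ≤ s2 - w
  have hbl : (2*w+3)*(lam*w) ≤ ((2-s2)*(2*w+3)+w+s2)*(s2-w) := by
    linarith [hQ0', mul_le_mul_of_nonneg_left hPa h23.le, hlw3, hs2, hs2w]
  have hK2u : (2-s2)*(2*w+3)+w+s2 ≤ 6.2426452 := by
    linarith [mul_nonneg (show (0:ℝ) ≤ 0.5857865 - (2-s2) by linarith)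
      (show (0:ℝ) ≤ 2*w+3 - 5.8264270 by linarith)]
  have hb4 : 8.2339*lam ≤ (2*w+3)*(lam*w) := by
    have h1 : (0:ℝ) ≤ (2*w+3)*w - 8.2339 := by
      linarith [mul_nonneg (show (0:ℝ) ≤ 2*w+3 - 5.8264270 by linarith)
        (show (0:ℝ) ≤ w - 1.4132135 by linarith)]
    linarith [mul_nonneg h1 hlam.le]
  have hc2 : 1.3189*lam ≤ s2 - w := by
    have h1 := mul_nonneg (show (0:ℝ) ≤ 6.2426452 - ((2-s2)*(2*w+3)+w+s2) by linarith)
      (show (0:ℝ) ≤ s2 - w by linarith)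
    linarith [hbl, hb4, h1]
  -- band upper : s2 - w ≤ 1.5728 lam
  have hbu : ((s2-1)*(2*w+3)+w+s2)*(s2-w) ≤ (2*w+3)*(lam*w) := by
    linarith [mul_le_mul_of_nonneg_left hQa h23.le, hP0', hlw3, hs2, hs2w]
  have hb1 : (2*w+3)*(lam*w) ≤ 8.2427*lam := by
    have h1 : (0:ℝ) ≤ 8.2427 - (2*w+3)*w := by nlinarith [sq_nonneg (w - 1.4142136)]
    linarith [mul_nonneg h1 hlam.le]
  have hc3 : s2 - w ≤ 1.5728*lam := by
    have hKb := mul_nonneg (show (0:ℝ) ≤ (s2-1)*(2*w+3) + w + s2 - 5.2408 from by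
        linarith [mul_nonneg (show (0:ℝ) ≤ s2 - 1.4142135 by linarith)
          (show (0:ℝ) ≤ 2*w+3 - 5.8264270 by linarith)])
      (show (0:ℝ) ≤ s2 - w by linarith)
    linarith [hbu, hb1, hKb]
  -- comparison conditions
  have heb : e*(2*w+3) ≤ 0.1597*lam := by
    rw [he']
    linarith [mul_nonneg (show (0:ℝ) ≤ (274/10000)*lam by positivity)
      (show (0:ℝ) ≤ 5.8284272 - (2*w+3) by linarith)]
  have hkey : 0.2262*lam ≤ (3-2*s2)*(s2-w) := by
    linarith [mul_nonneg (show (0:ℝ) ≤ 3-2*s2 - 0.1715728 by linarith)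
        (show (0:ℝ) ≤ s2 - w - 1.3189*lam by linarith),
      mul_nonneg (show (0:ℝ) ≤ 3-2*s2 - 0.1715728 by linarith) hlam.le]
  have hB1 : (2-s2+e)*w + 2*(2-s2+e) - 2 ≤ (1-(2-s2+e))*w - (2-s2+e) := by
    linarith [hkey, heb, hs2]
  have hkey2 : (3-2*s2)*(s2-w) ≤ 0.27*lam := by
    linarith [mul_nonneg (show (0:ℝ) ≤ s2 - w by linarith)
      (show (0:ℝ) ≤ 0.1715730 - (3-2*s2) by linarith), hc3]
  have heb5 : 0.358*lam ≤ e*(5*w+6) := by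
    rw [he']
    linarith [mul_nonneg (show (0:ℝ) ≤ (274/10000)*lam by positivity)
      (show (0:ℝ) ≤ 5*w+6 - 13.066 by linarith)]
  have hB2 : (1-(2-s2+4*e))*w - (2-s2+4*e) ≤ (2-s2+e)*w + 2*(2-s2+e) - 2 := by
    linarith [hkey2, heb5, hs2]
  have hB3 : (1-(2-s2+e))*w - (2-s2+e) ≤ (2-s2+4*e)*w + 2*(2-s2+4*e) - 2 := by
    linarith [hkey2, heb5, hs2, mul_nonneg hepos.le (show (0:ℝ) ≤ w by linarith)]
  -- resolve everything
  rw [min_eq_left hB1] at hP1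
  rw [min_eq_right (by linarith : -((1-(2-s2+e))*w - (2-s2+e)) ≤ -((2-s2+e)*w + 2*(2-s2+e) - 2))] at hQ1
  rw [max_eq_left hB2] at hPle
  rw [max_eq_left (by linarith : -((2-s2+4*e)*w + 2*(2-s2+4*e) - 2) ≤ -((1-(2-s2+e))*w - (2-s2+e)))] at hQle
  have hPf : P = (2-s2+e)*w + 2*(2-s2+e) - 2 := le_antisymm hPle hP1
  have hQg : Q = -((1-(2-s2+e))*w - (2-s2+e)) := le_antisymm hQle hQ1
  rw [hPf, hQg] at hlw
  have hse : lam * w = s2 - w - e := by linarith [hlw]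
  have hre : s2*(lam*w) = s2*(s2-w-e) := by rw [hse]
  rw [hPf] at hlX
  have hfin : lam * x = (2-s2)*(lam*w) - e*(w+s2) := by
    linarith [hlX, hse, hre, hs2]
  have hp1 : (0:ℝ) ≤ (2-s2)*w - 0.8277 := by
    linarith [mul_nonneg (show (0:ℝ) ≤ (2-s2) - 0.5857864 by linarith)
      (show (0:ℝ) ≤ w - 1.4132135 by linarith)]
  have hp2 : e*(w+s2) ≤ 0.0775*lam := by
    rw [he']
    linarith [mul_nonneg (show (0:ℝ) ≤ (274/10000)*lam by positivity)
      (show (0:ℝ) ≤ 2.8284272 - (w+s2) by linarith)]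
  have hxl : lam * (149/200) ≤ lam * x := by
    have h1 := mul_nonneg hp1 hlam.le
    linarith [hfin, hp2, h1, hse]
  exact (mul_le_mul_iff_right₀ hlam).mp hxl

lemma F_zero_imp {c : ℝ} (h0 : F0 c = 0) (h1 : F1 c = 0) : c = Real.sqrt 2 := by
  have hs2 : (Real.sqrt 2)^2 = 2 := Real.sq_sqrt (by norm_num)
  have hl := s2_lb; have hu := s2_ub
  rcases lt_trichotomy c (Real.sqrt 2) with hc | hc | hc
  · exfalso
    rcases lt_or_ge c (-1) with hc1 | hc1
    · have hle : F0 c ≤ -1 := by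
        apply F0_le
        intro a ha
        obtain ⟨ha0, ha1⟩ := calA_bounds' ha
        have hm := min_le_right (a*c + 2*a - 2) ((1-a)*c - a)
        simp only [g0]
        nlinarith [mul_nonneg (show (0:ℝ) ≤ 1 - a by linarith) (show (0:ℝ) ≤ -(c+1) by linarith)]
      rw [h0] at hle; linarith
    · have hup := F0_upper hc1
      rw [h0] at hup
      have hneg : (c^2-2)/(2*c+3) < 0 :=
        div_neg_of_neg_of_pos (by nlinarith) (by linarith)
      linarith
  · exact hc
  · exfalso
    have hle : F1 c ≤ 2 - (2 - Real.sqrt 2)*(c+2) := by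
      apply F1_le
      intro a ha
      obtain ⟨ha0, _⟩ := calA_bounds ha
      have hm := min_le_left (-(a*c + 2*a - 2)) (-((1-a)*c - a))
      simp only [g1]
      nlinarith [mul_le_mul_of_nonneg_right ha0 (show (0:ℝ) ≤ c + 2 by linarith)]
    rw [h1] at hle
    nlinarith [mul_pos (show (0:ℝ) < 2 - Real.sqrt 2 by linarith)
      (show (0:ℝ) < c - Real.sqrt 2 by linarith)]

lemma seq_tendsto (c : ℝ) (hc : 0 < c) (m : ℕ) :
    Tendsto (fun n : ℕ => c * (4:ℝ)^(-((n+m:ℕ):ℤ))) atTop (𝓝[>] (0:ℝ)) := by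
  apply tendsto_nhdsWithin_of_tendsto_nhds_of_eventually_within
  · have h1 : ∀ n : ℕ, c * (1/4:ℝ)^(n+m) = c * (4:ℝ)^(-((n+m:ℕ):ℤ)) := by
      intro n
      congr 1
      rw [zpow_neg, zpow_natCast, one_div, inv_pow]
    apply Tendsto.congr h1
    have h2 : Tendsto (fun n : ℕ => (1/4:ℝ)^n) atTop (𝓝 0) :=
      tendsto_pow_atTop_nhds_zero_of_lt_one (by norm_num) (by norm_num)
    have h3 := (h2.comp (tendsto_add_atTop_nat m)).const_mul c
    simpa using h3
  · filter_upwards with n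
    have : (0:ℝ) < c * (4:ℝ)^(-((n+m:ℕ):ℤ)) := by positivity
    exact this

theorem no_convergence (X Y : ℝ → ℝ)
    (hsol : ∀ lam : ℝ, 0 < lam →
      lam * X lam + Bop 0 (X lam) (Y lam) = 0 ∧
      lam * Y lam + Bop 1 (X lam) (Y lam) = 0) :
    ¬ ∃ p : ℝ × ℝ,
      Filter.Tendsto (fun lam => (X lam, Y lam)) (𝓝[>] (0 : ℝ)) (𝓝 p) := by
  rintro ⟨p, hp⟩
  have hXlim : Tendsto (fun l => X l) (𝓝[>] (0:ℝ)) (𝓝 p.1) :=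
    (continuous_fst.tendsto p).comp hp
  have hYlim : Tendsto (fun l => Y l) (𝓝[>] (0:ℝ)) (𝓝 p.2) :=
    (continuous_snd.tendsto p).comp hp
  have hwlim : Tendsto (fun l => X l - Y l) (𝓝[>] (0:ℝ)) (𝓝 (p.1 - p.2)) := hXlim.sub hYlim
  have hid : Tendsto (fun l : ℝ => l) (𝓝[>] (0:ℝ)) (𝓝 0) :=
    tendsto_id.mono_left nhdsWithin_le_nhds
  have hlX0 : Tendsto (fun l => l * X l) (𝓝[>] (0:ℝ)) (𝓝 0) := by
    have := hid.mul hXlim; rwa [zero_mul] at this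
  have hlY0 : Tendsto (fun l => l * Y l) (𝓝[>] (0:ℝ)) (𝓝 0) := by
    have := hid.mul hYlim; rwa [zero_mul] at this
  have heq : ∀ᶠ l in 𝓝[>] (0:ℝ), F0 (X l - Y l) = -(l * X l) ∧ F1 (X l - Y l) = -(l * Y l) := by
    filter_upwards [self_mem_nhdsWithin] with l hl
    obtain ⟨h1, h2⟩ := hsol l hl
    rw [Bop0_eq] at h1
    rw [Bop1_eq] at h2
    constructor <;> linarith
  have hF0 : Tendsto (fun l => F0 (X l - Y l)) (𝓝[>] (0:ℝ)) (𝓝 0) := by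
    apply Tendsto.congr' (heq.mono fun l h => h.1.symm)
    simpa using hlX0.neg
  have hF1 : Tendsto (fun l => F1 (X l - Y l)) (𝓝[>] (0:ℝ)) (𝓝 0) := by
    apply Tendsto.congr' (heq.mono fun l h => h.2.symm)
    simpa using hlY0.neg
  have hF0c : F0 (p.1 - p.2) = 0 := by
    by_contra hne
    have hpos : 0 < |F0 (p.1-p.2)| := abs_pos.mpr hne
    have ev1 : ∀ᶠ l in 𝓝[>] (0:ℝ), |(X l - Y l) - (p.1-p.2)| < |F0 (p.1-p.2)|/4 := by
      have h := Metric.tendsto_nhds.mp hwlim (|F0 (p.1-p.2)|/4) (by linarith)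
      filter_upwards [h] with l h'
      rwa [Real.dist_eq] at h'
    have ev2 : ∀ᶠ l in 𝓝[>] (0:ℝ), |F0 (X l - Y l)| < |F0 (p.1-p.2)|/4 := by
      have h := Metric.tendsto_nhds.mp hF0 (|F0 (p.1-p.2)|/4) (by linarith)
      filter_upwards [h] with l h'
      rwa [Real.dist_eq, sub_zero] at h'
    obtain ⟨l, h1, h2⟩ := (ev1.and ev2).exists
    have lip1 := F0_lip (p.1-p.2) (X l - Y l)
    have lip2 := F0_lip (X l - Y l) (p.1-p.2)
    rw [abs_sub_comm] at lip1
    obtain ⟨h2a, h2b⟩ := abs_lt.mp h2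
    rcases abs_cases (F0 (p.1-p.2)) with ⟨he1, _⟩ | ⟨he1, _⟩ <;>
      rcases abs_cases ((X l - Y l) - (p.1-p.2)) with ⟨he2, _⟩ | ⟨he2, _⟩ <;>
      linarith
  have hF1c : F1 (p.1 - p.2) = 0 := by
    by_contra hne
    have hpos : 0 < |F1 (p.1-p.2)| := abs_pos.mpr hne
    have ev1 : ∀ᶠ l in 𝓝[>] (0:ℝ), |(X l - Y l) - (p.1-p.2)| < |F1 (p.1-p.2)|/4 := by
      have h := Metric.tendsto_nhds.mp hwlim (|F1 (p.1-p.2)|/4) (by linarith)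
      filter_upwards [h] with l h'
      rwa [Real.dist_eq] at h'
    have ev2 : ∀ᶠ l in 𝓝[>] (0:ℝ), |F1 (X l - Y l)| < |F1 (p.1-p.2)|/4 := by
      have h := Metric.tendsto_nhds.mp hF1 (|F1 (p.1-p.2)|/4) (by linarith)
      filter_upwards [h] with l h'
      rwa [Real.dist_eq, sub_zero] at h'
    obtain ⟨l, h1, h2⟩ := (ev1.and ev2).exists
    have lip1 := F1_lip (p.1-p.2) (X l - Y l)
    have lip2 := F1_lip (X l - Y l) (p.1-p.2)
    rw [abs_sub_comm] at lip1
    obtain ⟨h2a, h2b⟩ := abs_lt.mp h2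
    rcases abs_cases (F1 (p.1-p.2)) with ⟨he1, _⟩ | ⟨he1, _⟩ <;>
      rcases abs_cases ((X l - Y l) - (p.1-p.2)) with ⟨he2, _⟩ | ⟨he2, _⟩ <;>
      linarith
  have hc : p.1 - p.2 = Real.sqrt 2 := F_zero_imp hF0c hF1c
  have hev : ∀ᶠ l in 𝓝[>] (0:ℝ), |X l - Y l - Real.sqrt 2| ≤ 1/1000 := by
    have h := Metric.tendsto_nhds.mp hwlim (1/1000) (show (0:ℝ) < 1/1000 by norm_num)
    filter_upwards [h] with l h'
    rw [Real.dist_eq, hc] at h'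
    exact h'.le
  -- sequence A
  have htA := seq_tendsto (10000/429) (by norm_num) 1
  have hXA : Tendsto (fun n : ℕ => X ((10000/429) * (4:ℝ)^(-((n+1:ℕ):ℤ)))) atTop (𝓝 p.1) :=
    hXlim.comp htA
  have evA : ∀ᶠ n : ℕ in atTop, X ((10000/429) * (4:ℝ)^(-((n+1:ℕ):ℤ))) ≤ 143/200 := by
    filter_upwards [htA.eventually hev, htA.eventually heq] with n hn he'
    set l := (10000/429 : ℝ) * (4:ℝ)^(-((n+1:ℕ):ℤ)) with hldef
    have hlpos : 0 < l := by positivity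
    refine claimA hlpos (n+1) (by omega) ?_ (by linarith [he'.1]) (by linarith [he'.2]) hn
    rw [hldef, ← mul_assoc]
    norm_num
  have hA : p.1 ≤ 143/200 := le_of_tendsto hXA evA
  -- sequence B
  have htB := seq_tendsto (10000/274) (by norm_num) 2
  have hXB : Tendsto (fun n : ℕ => X ((10000/274) * (4:ℝ)^(-((n+2:ℕ):ℤ)))) atTop (𝓝 p.1) :=
    hXlim.comp htB
  have evB : ∀ᶠ n : ℕ in atTop, 149/200 ≤ X ((10000/274) * (4:ℝ)^(-((n+2:ℕ):ℤ))) := by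
    filter_upwards [htB.eventually hev, htB.eventually heq] with n hn he'
    set l := (10000/274 : ℝ) * (4:ℝ)^(-((n+2:ℕ):ℤ)) with hldef
    have hlpos : 0 < l := by positivity
    refine claimB hlpos (n+2) (by omega) ?_ (by linarith [he'.1]) (by linarith [he'.2]) hn
    rw [hldef, ← mul_assoc]
    norm_num
  have hB : 149/200 ≤ p.1 := ge_of_tendsto hXB evB
  linarith
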